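/- Let 0 < a < 1/2 and a ≤ x_i ≤ 1−a, with w_i > 0, ∑ w_i = 1. Set T = exp( (1−2a)/(2(a(1−a))²) · [∑ w_i x_i² − (∑ w_i x_i)²] ). Then (1/T) · ∏ (x_i/(1−x_i))^{w_i} ≤ (∑ w_i x_i)/(∑ w_i(1−x_i)) ≤ T · ∏ (x_i/(1−x_i))^{w_i}. -/

import Mathlib

open Real Set

lemma deriv_aux (c : ℝ) (C : ℝ) {x : ℝ} (hx0 : 0 < x) (hx1 : x < 1) :
    HasDerivAt (fun y => C * y ^ 2 + c * (Real.log y - Real.log (1 - y)))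
      (C * (2 * x) + c * (1 / x + 1 / (1 - x))) x := by
  have h1x : (0:ℝ) < 1 - x := by linarith
  have h1 : HasDerivAt (fun y : ℝ => Real.log y) x⁻¹ x := Real.hasDerivAt_log (ne_of_gt hx0)
  have h2 : HasDerivAt (fun y : ℝ => Real.log (1 - y)) ((1 - x)⁻¹ * (-1)) x := by
    exact (Real.hasDerivAt_log (ne_of_gt h1x)).comp x ((hasDerivAt_id x).const_sub 1)
  have h3 : HasDerivAt (fun y : ℝ => C * y ^ 2) (C * (2 * x)) x := by
    simpa using (hasDerivAt_pow 2 x).const_mul C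
  have := h3.add ((h1.sub h2).const_mul c)
  convert this using 1
  · rfl
  · rfl
  · rfl
  · ring

lemma deriv2_aux (c : ℝ) (C : ℝ) {x : ℝ} (hx0 : 0 < x) (hx1 : x < 1) :
    HasDerivAt (fun y => C * (2 * y) + c * (1 / y + 1 / (1 - y)))
      (C * 2 + c * (-(1 / x ^ 2) + 1 / (1 - x) ^ 2)) x := by
  have h1x : (0:ℝ) < 1 - x := by linarith
  have h1 : HasDerivAt (fun y : ℝ => y⁻¹) (-(x ^ 2)⁻¹) x := hasDerivAt_inv (ne_of_gt hx0)
  have h2 : HasDerivAt (fun y : ℝ => (1 - y)⁻¹) (-((1 - x) ^ 2)⁻¹ * (-1)) x :=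
    (hasDerivAt_inv (ne_of_gt h1x)).comp x ((hasDerivAt_id x).const_sub 1)
  have h3 : HasDerivAt (fun y : ℝ => C * (2 * y)) (C * 2) x := by
    simpa using ((hasDerivAt_id x).const_mul (2:ℝ)).const_mul C
  have := h3.add ((h1.add h2).const_mul c)
  convert this using 2
  · rfl
  · rfl
  · simp only [Pi.add_apply, one_div]
  · ring

lemma conv_aux (a : ℝ) (ha : 0 < a) (ha' : a < 1/2) (c : ℝ) (hc : |c| ≤ 1) :
    ConvexOn ℝ (Set.Icc a (1-a))
      (fun y => (1-2*a)/(2*(a*(1-a))^2) * y^2 + c * (Real.log y - Real.log (1-y))) := by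
  set C := (1-2*a)/(2*(a*(1-a))^2) with hCdef
  have hab : a ≤ 1 - a := by linarith
  have hmem : ∀ y ∈ Set.Icc a (1-a), 0 < y ∧ y < 1 := fun y hy =>
    ⟨lt_of_lt_of_le ha hy.1, by have := hy.2; linarith⟩
  have hmem' : ∀ y ∈ Set.Ioo a (1-a), 0 < y ∧ y < 1 := fun y hy =>
    hmem y ⟨hy.1.le, hy.2.le⟩
  set g := fun y => C * y ^ 2 + c * (Real.log y - Real.log (1-y)) with hgdef
  set φ := fun y => C * (2 * y) + c * (1 / y + 1 / (1 - y)) with hφdef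
  have hderiv : ∀ y : ℝ, 0 < y → y < 1 → deriv g y = φ y := fun y h0 h1 =>
    (deriv_aux c C h0 h1).deriv
  have hd2 : ∀ y ∈ Set.Ioo a (1-a), HasDerivAt (deriv g)
      (C * 2 + c * (-(1 / y ^ 2) + 1 / (1 - y) ^ 2)) y := by
    intro y hy
    obtain ⟨h0, h1⟩ := hmem' y hy
    have heq : φ =ᶠ[nhds y] deriv g := by
      filter_upwards [isOpen_Ioo.mem_nhds (show y ∈ Set.Ioo (0:ℝ) 1 from ⟨h0, h1⟩)] with z hz
      exact (hderiv z hz.1 hz.2).symm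
    exact (deriv2_aux c C h0 h1).congr_of_eventuallyEq heq.symm
  apply convexOn_of_deriv2_nonneg (convex_Icc _ _)
  · intro y hy
    exact (deriv_aux c C (hmem y hy).1 (hmem y hy).2).continuousAt.continuousWithinAt
  · rw [interior_Icc]
    intro y hy
    exact (deriv_aux c C (hmem' y hy).1 (hmem' y hy).2).differentiableAt.differentiableWithinAt
  · rw [interior_Icc]
    intro y hy
    exact (hd2 y hy).differentiableAt.differentiableWithinAt
  · rw [interior_Icc]
    intro y hy
    have h2 : deriv (deriv g) y = C * 2 + c * (-(1 / y ^ 2) + 1 / (1 - y) ^ 2) :=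
      (hd2 y hy).deriv
    have : deriv^[2] g y = deriv (deriv g) y := rfl
    rw [this, h2]
    obtain ⟨h0, h1⟩ := hmem' y hy
    obtain ⟨hc1, hc2⟩ := abs_le.mp hc
    have hy1 : a ≤ y := hy.1.le
    have hy2 : y ≤ 1 - a := hy.2.le
    have hyq : a * (1 - a) ≤ y * (1 - y) := by nlinarith
    have ha1 : (0:ℝ) < 1 - a := by linarith
    have hy0' : y ≠ 0 := h0.ne'
    have hy1' : (1:ℝ) - y ≠ 0 := by intro h; rw [sub_eq_zero] at h; linarith
    have ha0' : a ≠ 0 := ha.ne'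
    have ha1' : (1:ℝ) - a ≠ 0 := ha1.ne'
    have hP : (0:ℝ) < (a * (1 - a)) ^ 2 := pow_pos (mul_pos ha ha1) 2
    have hQ : (0:ℝ) < (y * (1 - y)) ^ 2 := pow_pos (mul_pos h0 (by linarith)) 2
    have hQP : (a * (1 - a)) ^ 2 ≤ (y * (1 - y)) ^ 2 :=
      pow_le_pow_left₀ (mul_pos ha ha1).le hyq 2
    have key : 0 ≤ (1 - 2*a) * (y * (1 - y)) ^ 2 + c * (2*y - 1) * (a * (1 - a)) ^ 2 := by
      have h1c : c * (2*y - 1) ≥ -(1 - 2*a) := by nlinarith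
      nlinarith [mul_nonneg (show (0:ℝ) ≤ 1 - 2*a by linarith)
        (sub_nonneg.mpr hQP)]
    have expand : C * 2 + c * (-(1 / y ^ 2) + 1 / (1 - y) ^ 2)
        = ((1 - 2*a) * (y * (1 - y)) ^ 2 + c * (2*y - 1) * (a * (1 - a)) ^ 2)
          / ((a * (1 - a)) ^ 2 * (y * (1 - y)) ^ 2) := by
      rw [hCdef]
      field_simp
      ring
    rw [expand]
    exact div_nonneg key (mul_pos hP hQ).le

theorem ky_fan_symmetric_interval
    (n : ℕ) (a : ℝ) (ha : 0 < a) (ha' : a < 1 / 2)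
    (w x : Fin n → ℝ)
    (hw : ∀ i, 0 < w i) (hws : ∑ i, w i = 1)
    (hx : ∀ i, x i ∈ Set.Icc a (1 - a)) :
    (Real.exp ((1 - 2 * a) / (2 * (a * (1 - a)) ^ 2) *
          (∑ i, w i * (x i) ^ 2 - (∑ i, w i * x i) ^ 2)))⁻¹ *
        ∏ i, (x i / (1 - x i)) ^ w i ≤
      (∑ i, w i * x i) / (∑ i, w i * (1 - x i)) ∧
    (∑ i, w i * x i) / (∑ i, w i * (1 - x i)) ≤
      Real.exp ((1 - 2 * a) / (2 * (a * (1 - a)) ^ 2) *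
          (∑ i, w i * (x i) ^ 2 - (∑ i, w i * x i) ^ 2)) *
        ∏ i, (x i / (1 - x i)) ^ w i := by
  have hxi : ∀ i, 0 < x i ∧ x i < 1 := fun i =>
    ⟨lt_of_lt_of_le ha (hx i).1, by have := (hx i).2; linarith⟩
  set C := (1 - 2 * a) / (2 * (a * (1 - a)) ^ 2) with hCdef
  set m := ∑ i, w i * x i with hmdef
  set Q := ∑ i, w i * (x i) ^ 2 with hQdef
  set S := ∑ i, w i * (Real.log (x i) - Real.log (1 - x i)) with hSdef
  -- m ∈ [a, 1-a]
  have hma : a ≤ m := by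
    have : ∑ i, w i * a ≤ m := Finset.sum_le_sum fun i _ =>
      mul_le_mul_of_nonneg_left (hx i).1 (hw i).le
    calc a = (∑ i, w i) * a := by rw [hws, one_mul]
    _ = ∑ i, w i * a := by rw [Finset.sum_mul]
    _ ≤ m := this
  have hmb : m ≤ 1 - a := by
    have : m ≤ ∑ i, w i * (1 - a) := Finset.sum_le_sum fun i _ =>
      mul_le_mul_of_nonneg_left (hx i).2 (hw i).le
    calc m ≤ ∑ i, w i * (1 - a) := this
    _ = (∑ i, w i) * (1 - a) := by rw [Finset.sum_mul]
    _ = 1 - a := by rw [hws, one_mul]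
  have hm0 : 0 < m := lt_of_lt_of_le ha hma
  have hm1 : m < 1 := by linarith
  -- Jensen for c = 1 and c = -1
  have smul_eq : ∀ i, w i • x i = w i * x i := fun i => rfl
  have jensen : ∀ c : ℝ, |c| ≤ 1 →
      C * m ^ 2 + c * (Real.log m - Real.log (1 - m)) ≤ C * Q + c * S := by
    intro c hc
    have J := (conv_aux a ha ha' c hc).map_sum_le (t := Finset.univ) (w := w) (p := x)
      (fun i _ => (hw i).le) hws (fun i _ => hx i)
    simp only [smul_eq_mul] at J
    rw [← hmdef] at J
    calc C * m ^ 2 + c * (Real.log m - Real.log (1 - m))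
        ≤ ∑ i, w i * (C * (x i) ^ 2 + c * (Real.log (x i) - Real.log (1 - x i))) := J
      _ = C * Q + c * S := by
          rw [hQdef, hSdef, Finset.mul_sum, Finset.mul_sum, ← Finset.sum_add_distrib]
          exact Finset.sum_congr rfl fun i _ => by ring
  have J1 := jensen 1 (by norm_num)
  have J2 := jensen (-1) (by norm_num)
  have hup : Real.log m - Real.log (1 - m) ≤ C * (Q - m ^ 2) + S := by linarith
  have hlo : S ≤ C * (Q - m ^ 2) + (Real.log m - Real.log (1 - m)) := by linarith
  -- product = exp S
  have hprod : ∏ i, (x i / (1 - x i)) ^ w i = Real.exp S := by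
    rw [hSdef, Real.exp_sum]
    refine Finset.prod_congr rfl fun i _ => ?_
    rw [Real.rpow_def_of_pos (div_pos (hxi i).1 (by linarith [(hxi i).2])),
      Real.log_div (hxi i).1.ne' (ne_of_gt (show (0:ℝ) < 1 - x i by linarith [(hxi i).2]))]
    ring_nf
  -- ratio = exp (log m - log (1-m))
  have hsum1 : ∑ i, w i * (1 - x i) = 1 - m := by
    have h : ∑ i, w i * (1 - x i) = ∑ i, (w i - w i * x i) :=
      Finset.sum_congr rfl fun i _ => by ring
    rw [h, Finset.sum_sub_distrib, hws, hmdef]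
  have hratio : m / (∑ i, w i * (1 - x i)) = Real.exp (Real.log m - Real.log (1 - m)) := by
    rw [hsum1, Real.exp_sub, Real.exp_log hm0, Real.exp_log (by linarith)]
  constructor
  · rw [hprod, hratio, inv_mul_le_iff₀ (Real.exp_pos _), ← Real.exp_add, Real.exp_le_exp]
    linarith
  · rw [hprod, hratio, ← Real.exp_add, Real.exp_le_exp]
    linarith
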